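/- For any finite simple graph G and any injective function f: V → ℝ, and any k ≥ 0, the sum over all vertices v of the number W_k(v) of k-dimensional cliques in S(v) that contain both a vertex w with f(w) < f(v) and a vertex u with f(u) > f(v) equals k times the number of (k+1)-dimensional cliques of G. -/
import Mathlib


open Finset

attribute [local instance] Classical.propDecidable

variable {V : Type*}

/-- Number of complete subgraphs `K_k` of `G` whose vertex set lies inside `A`. -/
noncomputable def cliquesIn [Fintype V] (G : SimpleGraph V) (k : ℕ) (A : Finset V) : ℕ :=
  ((G.cliqueFinset k).filter (fun s => s ⊆ A)).card

/-- Euler characteristic of the subgraph of `G` induced on `A`. -/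
noncomputable def eulerCharOn [Fintype V] (G : SimpleGraph V) (A : Finset V) : ℤ :=
  ∑ k ∈ Finset.range (Fintype.card V + 1), (-1 : ℤ) ^ k * (cliquesIn G (k + 1) A : ℤ)

/-- Euler characteristic of `G`. -/
noncomputable def eulerChar [Fintype V] (G : SimpleGraph V) : ℤ :=
  eulerCharOn G Finset.univ

/-- Curvature of `G` at `v`. -/
noncomputable def curvature [Fintype V] (G : SimpleGraph V) (v : V) : ℚ :=
  ∑ k ∈ Finset.range (Fintype.card V + 1),
    (-1 : ℚ) ^ k * (cliquesIn G k (G.neighborFinset v) : ℚ) / (k + 1)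

/-- Exit set: neighbors of `v` with smaller `f`-value. -/
noncomputable def exitSet [Fintype V] (G : SimpleGraph V) (f : V → ℝ) (v : V) : Finset V :=
  (G.neighborFinset v).filter (fun w => f w < f v)

/-- Entrance set: neighbors of `v` with larger `f`-value. -/
noncomputable def enterSet [Fintype V] (G : SimpleGraph V) (f : V → ℝ) (v : V) : Finset V :=
  (G.neighborFinset v).filter (fun w => f v < f w)

/-- Poincaré–Hopf index of `f` at `v`. -/
noncomputable def indexOf [Fintype V] (G : SimpleGraph V) (f : V → ℝ) (v : V) : ℤ :=
  1 - eulerCharOn G (exitSet G f v)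

/-- **Intermediate equations.** For any finite simple graph `G`, injective `f : V → ℝ` and
`k ≥ 0`, the sum over all vertices `v` of the number `W_k(v)` of `k`-dimensional cliques
(`K_{k+1}` subgraphs) in `S(v)` containing both a vertex with smaller `f`-value and a vertex
with larger `f`-value than `f(v)` equals `k` times the number of `(k+1)`-dimensional cliques
(`K_{k+2}` subgraphs) of `G`. -/
theorem intermediate_equation [Fintype V] (G : SimpleGraph V) (f : V → ℝ)
    (hf : Function.Injective f) (k : ℕ) :
    ∑ v : V, ((G.cliqueFinset (k + 1)).filter (fun s =>
        s ⊆ G.neighborFinset v ∧ (∃ w ∈ s, f w < f v) ∧ (∃ u ∈ s, f v < f u))).card =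
      k * cliquesIn G (k + 2) Finset.univ := by
  classical
  set P : V → Finset (Finset V) := fun v => (G.cliqueFinset (k + 1)).filter (fun s =>
      s ⊆ G.neighborFinset v ∧ (∃ w ∈ s, f w < f v) ∧ (∃ u ∈ s, f v < f u)) with hP
  set Q : Finset V → Finset V := fun t => t.filter (fun v =>
      (∃ w ∈ t, f w < f v) ∧ (∃ u ∈ t, f v < f u)) with hQ
  have key : ∑ v : V, (P v).card = ∑ t ∈ G.cliqueFinset (k + 2), (Q t).card := by
    rw [← Finset.card_sigma, ← Finset.card_sigma]
    apply Finset.card_bij' (fun p _ => (⟨insert p.1 p.2, p.1⟩ : Σ _ : Finset V, V))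
      (fun p _ => (⟨p.2, p.1.erase p.2⟩ : Σ _ : V, Finset V))
    · rintro ⟨v, s⟩ hmem
      simp only [Finset.mem_sigma, Finset.mem_univ, hP, Finset.mem_filter,
        SimpleGraph.mem_cliqueFinset_iff, true_and] at hmem
      obtain ⟨hs, hsub, ⟨w, hw, hwlt⟩, ⟨u, hu, hult⟩⟩ := hmem
      have hvs : v ∉ s := by
        intro hv
        exact G.irrefl ((G.mem_neighborFinset v v).mp (hsub hv))
      have ht : G.IsNClique (k + 2) (insert v s) := by
        refine hs.insert ?_
        intro b hb
        exact (G.mem_neighborFinset v b).mp (hsub hb)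
      simp only [Finset.mem_sigma, SimpleGraph.mem_cliqueFinset_iff, hQ,
        Finset.mem_filter]
      exact ⟨ht, Finset.mem_insert_self _ _,
        ⟨w, Finset.mem_insert_of_mem hw, hwlt⟩, ⟨u, Finset.mem_insert_of_mem hu, hult⟩⟩
    · rintro ⟨t, v⟩ hmem
      simp only [Finset.mem_sigma, SimpleGraph.mem_cliqueFinset_iff, hQ,
        Finset.mem_filter] at hmem
      obtain ⟨ht, hv, ⟨w, hw, hwlt⟩, ⟨u, hu, hult⟩⟩ := hmem
      have hs : G.IsNClique (k + 1) (t.erase v) :=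
        ⟨ht.isClique.subset (Finset.erase_subset _ _),
          by rw [Finset.card_erase_of_mem hv, ht.card_eq]; omega⟩
      simp only [Finset.mem_sigma, Finset.mem_univ, hP, Finset.mem_filter,
        SimpleGraph.mem_cliqueFinset_iff, true_and]
      refine ⟨hs, ?_, ⟨w, ?_, hwlt⟩, ⟨u, ?_, hult⟩⟩
      · intro x hx
        rw [G.mem_neighborFinset]
        exact (ht.isClique hv (Finset.mem_of_mem_erase hx)
          (Ne.symm (Finset.ne_of_mem_erase hx)))
      · exact Finset.mem_erase.mpr ⟨fun h => absurd hwlt (by simp [h]), hw⟩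
      · exact Finset.mem_erase.mpr ⟨fun h => absurd hult (by simp [h]), hu⟩
    · rintro ⟨v, s⟩ hmem
      simp only [Finset.mem_sigma, Finset.mem_univ, hP, Finset.mem_filter,
        SimpleGraph.mem_cliqueFinset_iff, true_and] at hmem
      have hvs : v ∉ s := by
        intro hv
        exact G.irrefl ((G.mem_neighborFinset v v).mp (hmem.2.1 hv))
      simp [Finset.erase_insert hvs]
    · rintro ⟨t, v⟩ hmem
      simp only [Finset.mem_sigma, SimpleGraph.mem_cliqueFinset_iff, hQ,
        Finset.mem_filter] at hmem
      simp [Finset.insert_erase hmem.2.1]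
  have hQcard : ∀ t ∈ G.cliqueFinset (k + 2), (Q t).card = k := by
    intro t ht
    rw [SimpleGraph.mem_cliqueFinset_iff] at ht
    have htc : t.card = k + 2 := ht.card_eq
    have htne : t.Nonempty := Finset.card_pos.mp (by omega)
    obtain ⟨m, hm, hmin⟩ := Finset.exists_min_image t f htne
    obtain ⟨M, hM, hmax⟩ := Finset.exists_max_image t f htne
    have hmM : m ≠ M := by
      intro h
      subst h
      have : ∀ x ∈ t, x = m := fun x hx =>
        hf (le_antisymm (hmax x hx) (hmin x hx))
      have : t ⊆ {m} := fun x hx => Finset.mem_singleton.mpr (this x hx)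
      have := Finset.card_le_card this
      simp at this
      omega
    have hQt : Q t = t \ {m, M} := by
      ext x
      simp only [hQ, Finset.mem_filter, Finset.mem_sdiff, Finset.mem_insert,
        Finset.mem_singleton]
      constructor
      · rintro ⟨hx, ⟨w, hw, hwlt⟩, ⟨u, hu, hult⟩⟩
        refine ⟨hx, ?_⟩
        push_neg
        constructor
        · rintro rfl; exact absurd (hmin w hw) (not_le.mpr hwlt)
        · rintro rfl; exact absurd (hmax u hu) (not_le.mpr hult)
      · rintro ⟨hx, hne⟩
        push_neg at hne
        refine ⟨hx, ⟨m, hm, ?_⟩, ⟨M, hM, ?_⟩⟩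
        · exact lt_of_le_of_ne (hmin x hx) (fun h => hne.1 (hf h.symm))
        · exact lt_of_le_of_ne (hmax x hx) (fun h => hne.2 (hf h))
    rw [hQt, Finset.card_sdiff_of_subset (by
      intro x hx
      simp only [Finset.mem_insert, Finset.mem_singleton] at hx
      rcases hx with rfl | rfl
      · exact hm
      · exact hM), htc, Finset.card_insert_of_notMem (by simpa using hmM),
      Finset.card_singleton]
    omega
  rw [key, Finset.sum_congr rfl hQcard, Finset.sum_const, smul_eq_mul]
  have : cliquesIn G (k + 2) Finset.univ = (G.cliqueFinset (k + 2)).card := by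
    unfold cliquesIn
    congr 1
    exact Finset.filter_true_of_mem (fun s _ => Finset.subset_univ s)
  rw [this, mul_comm]
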